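/- Let Ω be a nonempty open subset of ℝ^{n+1} (n ≥ 1) with nonempty topological boundary ∂Ω and with finite Lebesgue measure, and let u(y) = dist(y, ∂Ω). Then Lebesgue-almost every point of Ω lies on the relative interior of a maximal minimizing segment: for a.e. y ∈ Ω there exist t > u(y), x ∈ ∂Ω and z ∈ Ω with u(z) = t, ‖x − z‖ = t, and y = x + (u(y)/t)(z − x). Equivalently, |Ω \ Ω*| = 0, where Ω* = ⋃_{s>0} Γ_s^+. -/

import Mathlib

set_option linter.unusedSectionVars false

open RealInnerProductSpace Metric Set MeasureTheory Filter
open scoped Topology ENNReal NNReal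

section Aux

variable {E : Type*} [NormedAddCommGroup E] [InnerProductSpace ℝ E]

omit [InnerProductSpace ℝ E] in
/-- lower bound for infDist -/
lemma my_le_infDist {s : Set E} (hs : s.Nonempty) {x : E} {c : ℝ}
    (h : ∀ y ∈ s, c ≤ dist x y) : c ≤ infDist x s := by
  refine le_of_not_gt fun hlt => ?_
  obtain ⟨y, hy, hd⟩ := (infDist_lt_iff hs).1 hlt
  exact absurd hd (not_lt.2 (h y hy))

/-- Key geometric inequality: the "interpolation at parameter q" map is expanding by factor q,
given the nearest-point inequalities. -/
lemma key_ineq {q : ℝ} (hq0 : 0 ≤ q) (hq1 : q ≤ 1) {x₁ z₁ x₂ z₂ : E}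
    (h₁ : ‖z₁ - x₁‖ ≤ ‖z₁ - x₂‖) (h₂ : ‖z₂ - x₂‖ ≤ ‖z₂ - x₁‖) :
    q * ‖z₁ - z₂‖ ≤ ‖(x₁ + q • (z₁ - x₁)) - (x₂ + q • (z₂ - x₂))‖ := by
  set b := x₁ - x₂ with hb
  set v := z₁ - x₁ with hv
  set w := z₂ - x₂ with hw
  have ha : z₁ - z₂ = v - w + b := by simp only [hv, hw, hb]; abel
  have hD : (x₁ + q • (z₁ - x₁)) - (x₂ + q • (z₂ - x₂)) = q • (v - w + b) + (1 - q) • b := by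
    simp only [hv, hw, hb]
    module
  have e₁ : z₁ - x₂ = v + b := by simp only [hv, hb]; abel
  have e₂ : z₂ - x₁ = w - b := by simp only [hw, hb]; abel
  rw [e₁] at h₁
  rw [e₂] at h₂
  have sq₁ : ‖v‖ ^ 2 ≤ ‖v + b‖ ^ 2 := pow_le_pow_left₀ (norm_nonneg _) h₁ 2
  have sq₂ : ‖w‖ ^ 2 ≤ ‖w - b‖ ^ 2 := pow_le_pow_left₀ (norm_nonneg _) h₂ 2
  have ex₁ : ‖v + b‖ ^ 2 = ‖v‖ ^ 2 + 2 * ⟪v, b⟫ + ‖b‖ ^ 2 := norm_add_sq_real v b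
  have ex₂ : ‖w - b‖ ^ 2 = ‖w‖ ^ 2 - 2 * ⟪w, b⟫ + ‖b‖ ^ 2 := norm_sub_sq_real w b
  have hab : 0 ≤ ⟪v - w + b, b⟫ := by
    have hsplit : ⟪v - w + b, b⟫ = ⟪v, b⟫ - ⟪w, b⟫ + ‖b‖ ^ 2 := by
      rw [inner_add_left, inner_sub_left, real_inner_self_eq_norm_sq]
    nlinarith [sq₁, sq₂, ex₁, ex₂]
  set aa := v - w + b with haa
  have hexp : ‖q • aa + (1 - q) • b‖ ^ 2
      = q ^ 2 * ‖aa‖ ^ 2 + 2 * (q * (1 - q) * ⟪aa, b⟫) + (1 - q) ^ 2 * ‖b‖ ^ 2 := by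
    have e3 : ‖q • aa + (1 - q) • b‖ ^ 2
        = ‖q • aa‖ ^ 2 + 2 * ⟪q • aa, (1 - q) • b⟫ + ‖(1 - q) • b‖ ^ 2 :=
      norm_add_sq_real _ _
    have e4 : ⟪q • aa, (1 - q) • b⟫ = q * ((1 - q) * ⟪aa, b⟫) := by
      rw [real_inner_smul_left, real_inner_smul_right]
    have e5 : ‖q • aa‖ = q * ‖aa‖ := by
      rw [norm_smul, Real.norm_eq_abs, abs_of_nonneg hq0]
    have e6 : ‖(1 - q) • b‖ = (1 - q) * ‖b‖ := by
      rw [norm_smul, Real.norm_eq_abs, abs_of_nonneg (by linarith : (0:ℝ) ≤ 1 - q)]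
    rw [e3, e4, e5, e6]
    ring
  have hgoal2 : (q * ‖aa‖) ^ 2 ≤ ‖q • aa + (1 - q) • b‖ ^ 2 := by
    rw [hexp]
    nlinarith [mul_nonneg (mul_nonneg hq0 (by linarith : (0:ℝ) ≤ 1 - q)) hab,
      sq_nonneg ((1 - q) * ‖b‖)]
  have hfin : q * ‖aa‖ ≤ ‖q • aa + (1 - q) • b‖ :=
    le_of_pow_le_pow_left₀ (two_ne_zero) (norm_nonneg _) hgoal2
  rw [ha, hD]
  exact hfin

end Aux



section Aux2

variable {E : Type*} [NormedAddCommGroup E] [NormedSpace ℝ E]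

lemma my_le_infDist' {s : Set E} (hs : s.Nonempty) {x : E} {c : ℝ}
    (h : ∀ y ∈ s, c ≤ dist x y) : c ≤ infDist x s := by
  refine le_of_not_gt fun hlt => ?_
  obtain ⟨y, hy, hd⟩ := (infDist_lt_iff hs).1 hlt
  exact absurd hd (not_lt.2 (h y hy))

/-- a point of an open set is at positive distance from the frontier -/
lemma upos {Ω : Set E} (hΩ : IsOpen Ω) (hfr : (frontier Ω).Nonempty) {y : E} (hy : y ∈ Ω) :
    0 < infDist y (frontier Ω) := by
  rw [← isClosed_frontier.notMem_iff_infDist_pos hfr]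
  intro h
  rw [hΩ.frontier_eq] at h
  exact h.2 hy

/-- the open ball of radius `infDist z (frontier Ω)` around `z ∈ Ω` is contained in `Ω` -/
lemma ball_infDist_subset {Ω : Set E} (hΩ : IsOpen Ω) {z : E} (hz : z ∈ Ω) :
    ball z (infDist z (frontier Ω)) ⊆ Ω := by
  rcases le_or_gt (infDist z (frontier Ω)) 0 with h | h
  · rw [ball_eq_empty.2 h]; exact empty_subset _
  · have hsub : ball z (infDist z (frontier Ω)) ⊆ Ω ∪ (closure Ω)ᶜ := by
      intro w hw
      by_cases hwc : w ∈ closure Ω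
      · left
        by_contra hwΩ
        have hwf : w ∈ frontier Ω := by rw [hΩ.frontier_eq]; exact ⟨hwc, hwΩ⟩
        have := infDist_le_dist_of_mem (x := z) hwf
        rw [dist_comm] at this
        exact absurd (mem_ball.1 hw) (not_lt.2 this)
      · right; exact hwc
    exact (convex_ball z _).isPreconnected.subset_left_of_subset_union hΩ
      isClosed_closure.isOpen_compl
      (disjoint_compl_right.mono_left subset_closure) hsub
      ⟨z, mem_ball_self h, hz⟩

/-- distance to the frontier along a minimizing segment -/
lemma infDist_seg {Ω : Set E} {x z : E} (hx : x ∈ frontier Ω)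
    (hz : infDist z (frontier Ω) = ‖x - z‖) {q : ℝ} (hq0 : 0 ≤ q) (hq1 : q ≤ 1) :
    infDist (x + q • (z - x)) (frontier Ω) = q * ‖x - z‖ := by
  have hfr : (frontier Ω).Nonempty := ⟨x, hx⟩
  set y := x + q • (z - x) with hy
  have hyx : dist y x = q * ‖x - z‖ := by
    rw [dist_eq_norm]
    have : y - x = q • (z - x) := by rw [hy]; abel
    rw [this, norm_smul, Real.norm_eq_abs, abs_of_nonneg hq0, norm_sub_rev]
  have hzy : dist z y = (1 - q) * ‖x - z‖ := by
    rw [dist_eq_norm]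
    have : z - y = (1 - q) • (z - x) := by rw [hy]; module
    rw [this, norm_smul, Real.norm_eq_abs, abs_of_nonneg (by linarith : (0:ℝ) ≤ 1 - q),
      norm_sub_rev]
  refine le_antisymm (le_trans (infDist_le_dist_of_mem hx) hyx.le) ?_
  refine my_le_infDist' hfr fun w hw => ?_
  have h1 : ‖x - z‖ ≤ dist z w := hz ▸ infDist_le_dist_of_mem hw
  have h2 : dist z w ≤ dist z y + dist y w := dist_triangle _ _ _
  rw [hzy] at h2
  linarith

/-- points on the open minimizing segment lie in `Ω` -/
lemma seg_mem_omega {Ω : Set E} (hΩ : IsOpen Ω) {x z : E} (hx : x ∈ frontier Ω) (hzΩ : z ∈ Ω)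
    (hz : infDist z (frontier Ω) = ‖x - z‖) {q : ℝ} (hq0 : 0 < q) (hq1 : q ≤ 1) :
    x + q • (z - x) ∈ Ω := by
  have ht : 0 < ‖x - z‖ := hz ▸ upos hΩ ⟨x, hx⟩ hzΩ
  rcases eq_or_lt_of_le hq1 with rfl | hq1'
  · have : x + (1:ℝ) • (z - x) = z := by module
    rw [this]; exact hzΩ
  · refine ball_infDist_subset hΩ hzΩ ?_
    rw [mem_ball, hz]
    have : x + q • (z - x) - z = (1 - q) • (x - z) := by module
    rw [dist_eq_norm, this, norm_smul, Real.norm_eq_abs,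
      abs_of_nonneg (by linarith : (0:ℝ) ≤ 1 - q)]
    nlinarith

end Aux2



section Aux3

variable {E : Type*} [NormedAddCommGroup E] [InnerProductSpace ℝ E]

/-- the set of points lying in the relative interior of a maximal minimizing segment -/
def goodSet (Ω : Set E) : Set E :=
  {y | ∃ t, infDist y (frontier Ω) < t ∧ ∃ x z, x ∈ frontier Ω ∧ z ∈ Ω ∧
    infDist z (frontier Ω) = t ∧ ‖x - z‖ = t ∧
    y = x + (infDist y (frontier Ω) / t) • (z - x)}

lemma mem_goodSet {Ω : Set E} (hΩ : IsOpen Ω) {x z : E} (hx : x ∈ frontier Ω) (hzΩ : z ∈ Ω)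
    (hz : infDist z (frontier Ω) = ‖x - z‖) {q : ℝ} (hq0 : 0 < q) (hq1 : q < 1) :
    x + q • (z - x) ∈ goodSet Ω := by
  have ht : 0 < ‖x - z‖ := hz ▸ upos hΩ ⟨x, hx⟩ hzΩ
  have hdist : infDist (x + q • (z - x)) (frontier Ω) = q * ‖x - z‖ :=
    infDist_seg hx hz hq0.le hq1.le
  refine ⟨‖x - z‖, ?_, x, z, hx, hzΩ, hz, rfl, ?_⟩
  · rw [hdist]; nlinarith
  · rw [hdist, mul_div_assoc, div_self ht.ne', mul_one]

end Aux3

section Aux4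

variable {m : ℕ}

local notation "𝔼" => EuclideanSpace ℝ (Fin m)

lemma injOn_interp {Ω : Set 𝔼} {q : ℝ} (hq0 : 0 < q) (hq1 : q < 1) :
    InjOn (fun p : 𝔼 × 𝔼 => p.1 + q • (p.2 - p.1))
      {p : 𝔼 × 𝔼 | p.1 ∈ frontier Ω ∧ p.2 ∈ Ω ∧
        infDist p.2 (frontier Ω) = ‖p.1 - p.2‖} := by
  rintro ⟨x₁, z₁⟩ ⟨hx₁, hz₁, hd₁⟩ ⟨x₂, z₂⟩ ⟨hx₂, hz₂, hd₂⟩ heq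
  simp only at heq
  have h₁ : ‖z₁ - x₁‖ ≤ ‖z₁ - x₂‖ := by
    rw [norm_sub_rev z₁ x₁, ← hd₁]
    rw [← dist_eq_norm]
    exact infDist_le_dist_of_mem hx₂
  have h₂ : ‖z₂ - x₂‖ ≤ ‖z₂ - x₁‖ := by
    rw [norm_sub_rev z₂ x₂, ← hd₂, ← dist_eq_norm]
    exact infDist_le_dist_of_mem hx₁
  have hk := key_ineq hq0.le hq1.le h₁ h₂
  rw [heq, sub_self, norm_zero] at hk
  have hz : z₁ = z₂ := by
    have : ‖z₁ - z₂‖ ≤ 0 := by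
      by_contra hcon
      push_neg at hcon
      nlinarith
    rw [← sub_eq_zero]
    exact norm_le_zero_iff.1 this
  subst hz
  have hx : x₁ = x₂ := by
    have h5 : (1 - q) • (x₁ - x₂) = 0 := by
      have : x₁ + q • (z₁ - x₁) - (x₂ + q • (z₁ - x₂)) = (1 - q) • (x₁ - x₂) := by module
      rw [← this, heq, sub_self]
    rcases smul_eq_zero.1 h5 with h | h
    · exact absurd h (by intro hc; rw [sub_eq_zero] at hc; linarith)
    · rwa [sub_eq_zero] at h
  rw [hx]

lemma goodSet_inter_measurable {Ω : Set 𝔼} (hΩ : IsOpen Ω) :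
    MeasurableSet (Ω ∩ goodSet Ω) := by
  set P : Set (𝔼 × 𝔼) := {p : 𝔼 × 𝔼 | p.1 ∈ frontier Ω ∧ p.2 ∈ Ω ∧
      infDist p.2 (frontier Ω) = ‖p.1 - p.2‖} with hP
  have hPmeas : MeasurableSet P := by
    refine MeasurableSet.inter ?_ (MeasurableSet.inter ?_ ?_)
    · exact measurable_fst isClosed_frontier.measurableSet
    · exact measurable_snd hΩ.measurableSet
    · exact measurableSet_eq_fun
        ((continuous_infDist_pt (frontier Ω)).comp continuous_snd).measurable
        (continuous_fst.sub continuous_snd).norm.measurable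
  have hunion : Ω ∩ goodSet Ω = Ω ∩ ⋃ (q : ℚ) (_ : 0 < (q:ℝ) ∧ (q:ℝ) < 1),
      (fun p : 𝔼 × 𝔼 => p.1 + (q : ℝ) • (p.2 - p.1)) '' P := by
    ext y
    constructor
    · rintro ⟨hyΩ, t, hyt, x, z, hx, hzΩ, hzt, hxz, hyeq⟩
      have hfr : (frontier Ω).Nonempty := ⟨x, hx⟩
      have huy : 0 < infDist y (frontier Ω) := upos hΩ hfr hyΩ
      have ht0 : 0 < t := huy.trans hyt
      set lam := infDist y (frontier Ω) / t with hlam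
      have hlam0 : 0 < lam := div_pos huy ht0
      have hlam1 : lam < 1 := (div_lt_one ht0).2 hyt
      obtain ⟨q, hq1, hq2⟩ := exists_rat_btwn hlam1
      have hq0 : 0 < (q : ℝ) := hlam0.trans hq1
      set mu := lam / q with hmu
      have hmu0 : 0 < mu := div_pos hlam0 hq0
      have hmu1 : mu < 1 := (div_lt_one hq0).2 hq1
      have hzx : infDist z (frontier Ω) = ‖x - z‖ := by rw [hzt, hxz]
      refine ⟨hyΩ, mem_iUnion.2 ⟨q, mem_iUnion.2 ⟨⟨hq0, hq2⟩,
        ⟨(x, x + mu • (z - x)), ⟨hx, ?_, ?_⟩, ?_⟩⟩⟩⟩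
      · exact seg_mem_omega hΩ hx hzΩ hzx hmu0 hmu1.le
      · show infDist (x + mu • (z - x)) (frontier Ω) = ‖x - (x + mu • (z - x))‖
        rw [infDist_seg hx hzx hmu0.le hmu1.le]
        have : x - (x + mu • (z - x)) = mu • (x - z) := by module
        rw [this, norm_smul, Real.norm_eq_abs, abs_of_nonneg hmu0.le]
      · show x + (q : ℝ) • (x + mu • (z - x) - x) = y
        have h6 : x + (q : ℝ) • (x + mu • (z - x) - x) = x + ((q : ℝ) * mu) • (z - x) := by
          module
        rw [h6, hmu, mul_div_cancel₀ _ hq0.ne']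
        rw [hyeq]
    · rintro ⟨hyΩ, hy⟩
      rw [mem_iUnion] at hy
      obtain ⟨q, hy⟩ := hy
      rw [mem_iUnion] at hy
      obtain ⟨⟨hq0, hq1⟩, ⟨⟨x, z⟩, ⟨hx, hzΩ, hd⟩, rfl⟩⟩ := hy
      exact ⟨hyΩ, mem_goodSet hΩ hx hzΩ hd hq0 hq1⟩
  rw [hunion]
  refine hΩ.measurableSet.inter (MeasurableSet.iUnion fun q => MeasurableSet.iUnion fun hq => ?_)
  exact hPmeas.image_of_continuousOn_injOn
    (show Continuous (fun p : 𝔼 × 𝔼 => p.1 + (q : ℝ) • (p.2 - p.1)) by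
      fun_prop).continuousOn
    (injOn_interp hq.1 hq.2)

end Aux4

theorem stmt_15 (n : ℕ) (hn : 1 ≤ n)
    (Ω : Set (EuclideanSpace ℝ (Fin (n + 1))))
    (hΩopen : IsOpen Ω) (hΩne : Ω.Nonempty) (hfr : (frontier Ω).Nonempty)
    (hvol : volume Ω < ⊤)
    (u : EuclideanSpace ℝ (Fin (n + 1)) → ℝ)
    (hu : ∀ y, u y = Metric.infDist y (frontier Ω)) :
    volume (Ω \ {y | ∃ t, u y < t ∧ ∃ x z, x ∈ frontier Ω ∧ z ∈ Ω ∧ u z = t ∧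
      ‖x - z‖ = t ∧ y = x + (u y / t) • (z - x)}) = 0 := by
  classical
  have hgs : {y | ∃ t, u y < t ∧ ∃ x z, x ∈ frontier Ω ∧ z ∈ Ω ∧ u z = t ∧
      ‖x - z‖ = t ∧ y = x + (u y / t) • (z - x)} = goodSet Ω := by
    simp only [hu]; rfl
  rw [hgs]
  by_contra hA0
  set A := Ω \ goodSet Ω with hA
  have hAmeas : MeasurableSet A := by
    have h9 : A = Ω \ (Ω ∩ goodSet Ω) := by rw [hA, diff_self_inter]
    rw [h9]
    exact hΩopen.measurableSet.diff (goodSet_inter_measurable hΩopen)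
  -- a choice of nearest boundary point for every point
  choose xsel hxsel_mem hxsel_dist using
    fun y : EuclideanSpace ℝ (Fin (n + 1)) => isClosed_frontier.exists_infDist_eq_dist hfr y
  -- a density point of A inside A
  have hbes := Besicovitch.ae_tendsto_measure_inter_div_of_measurableSet volume hAmeas
  obtain ⟨y₀, hy₀A, hy₀T⟩ : ∃ y₀ ∈ A, Tendsto
      (fun r => volume (A ∩ closedBall y₀ r) / volume (closedBall y₀ r)) (𝓝[>] 0) (𝓝 1) := by
    by_contra hcon
    push_neg at hcon
    refine hA0 (measure_mono_null (fun x hx => ?_) (MeasureTheory.ae_iff.1 hbes))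
    simp only [mem_setOf_eq]
    rw [indicator_of_mem hx, Pi.one_apply]
    exact hcon x hx
  have hy₀Ω : y₀ ∈ Ω := hy₀A.1
  set s₀ := infDist y₀ (frontier Ω) with hs₀def
  have hs₀ : 0 < s₀ := upos hΩopen hfr hy₀Ω
  -- choice of ε
  obtain ⟨ε, hε0, hε1, hεlt⟩ : ∃ ε : ℝ, 0 < ε ∧ ε ≤ 1 ∧ (1 + ε) ^ (n + 1) < 2 := by
    have hcont : Tendsto (fun x : ℝ => (1 + x) ^ (n + 1)) (𝓝 0) (𝓝 ((1 + 0) ^ (n + 1))) := by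
      apply Filter.Tendsto.pow
      exact tendsto_const_nhds.add tendsto_id
    have hev : ∀ᶠ x in 𝓝 (0 : ℝ), (1 + x) ^ (n + 1) < 2 :=
      hcont.eventually_lt_const (by norm_num)
    obtain ⟨δ, hδ0, hδ⟩ := Metric.eventually_nhds_iff.1 hev
    refine ⟨min (δ / 2) 1, by positivity, min_le_right _ _, ?_⟩
    apply hδ
    rw [Real.dist_eq, sub_zero, abs_of_pos (by positivity)]
    calc min (δ / 2) 1 ≤ δ / 2 := min_le_left _ _
      _ < δ := by linarith
  -- the key inequality at every small scale
  have key : ∀ ρ : ℝ, 0 < ρ → ρ < s₀ →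
      (1 + ENNReal.ofReal ((1 - ε * ρ / (s₀ + ρ)) ^ (n + 1))) *
        (volume (A ∩ closedBall y₀ ρ) / volume (closedBall y₀ ρ))
        ≤ ENNReal.ofReal ((1 + ε) ^ (n + 1)) := by
    intro ρ hρ0 hρs
    set lam := 1 - ε * ρ / (s₀ + ρ) with hlamdef
    have hsum : 0 < s₀ + ρ := by linarith
    have hfrac1 : ε * ρ / (s₀ + ρ) < 1 := by
      rw [div_lt_one hsum]; nlinarith
    have hfrac0 : 0 < ε * ρ / (s₀ + ρ) := by positivity
    have hlam0 : 0 < lam := by rw [hlamdef]; linarith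
    have hlam1 : lam < 1 := by rw [hlamdef]; linarith
    set B := closedBall y₀ ρ with hB
    set B' := closedBall y₀ ((1 + ε) * ρ) with hB'
    set c : EuclideanSpace ℝ (Fin (n + 1)) → EuclideanSpace ℝ (Fin (n + 1)) :=
      fun y => xsel y + lam • (y - xsel y) with hc
    set S := c '' (A ∩ B) with hS
    -- the image avoids A
    have hSA : ∀ p ∈ S, p ∉ A := by
      rintro _ ⟨a, ⟨haA, _⟩, rfl⟩
      have haΩ : a ∈ Ω := haA.1
      have hda : infDist a (frontier Ω) = ‖xsel a - a‖ := by
        rw [hxsel_dist a, dist_eq_norm, norm_sub_rev]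
      have hgood : c a ∈ goodSet Ω := mem_goodSet hΩopen (hxsel_mem a) haΩ hda hlam0 hlam1
      exact fun hmem => hmem.2 hgood
    -- the image is contained in the enlarged ball
    have hSB' : S ⊆ B' := by
      rintro _ ⟨a, ⟨haA, haB⟩, rfl⟩
      have haB2 : dist a y₀ ≤ ρ := mem_closedBall.1 haB
      have hua : infDist a (frontier Ω) ≤ s₀ + ρ := by
        calc infDist a (frontier Ω) ≤ infDist y₀ (frontier Ω) + dist a y₀ :=
          infDist_le_infDist_add_dist
        _ ≤ s₀ + ρ := by rw [← hs₀def]; linarith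
      have hca : dist (c a) a ≤ ε * ρ := by
        have h10 : c a - a = (1 - lam) • (xsel a - a) := by rw [hc]; module
        have h11 : ‖xsel a - a‖ = infDist a (frontier Ω) := by
          rw [hxsel_dist a, dist_eq_norm, norm_sub_rev]
        rw [dist_eq_norm, h10, norm_smul, Real.norm_eq_abs,
          abs_of_nonneg (by linarith : (0:ℝ) ≤ 1 - lam), h11]
        have h12 : 1 - lam = ε * ρ / (s₀ + ρ) := by rw [hlamdef]; ring
        calc (1 - lam) * infDist a (frontier Ω) ≤ (1 - lam) * (s₀ + ρ) := by
              apply mul_le_mul_of_nonneg_left hua (by linarith)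
          _ = ε * ρ := by rw [h12]; field_simp
      have : dist (c a) y₀ ≤ (1 + ε) * ρ := by
        calc dist (c a) y₀ ≤ dist (c a) a + dist a y₀ := dist_triangle _ _ _
          _ ≤ ε * ρ + ρ := add_le_add hca haB2
          _ = (1 + ε) * ρ := by ring
      exact mem_closedBall.2 this
    -- the contraction is expanding by factor lam
    have hexp : ∀ a b : EuclideanSpace ℝ (Fin (n + 1)),
        lam * dist a b ≤ dist (c a) (c b) := by
      intro a b
      have h₁ : ‖a - xsel a‖ ≤ ‖a - xsel b‖ := by
        rw [← dist_eq_norm, ← dist_eq_norm, ← hxsel_dist a]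
        exact infDist_le_dist_of_mem (hxsel_mem b)
      have h₂ : ‖b - xsel b‖ ≤ ‖b - xsel a‖ := by
        rw [← dist_eq_norm, ← dist_eq_norm, ← hxsel_dist b]
        exact infDist_le_dist_of_mem (hxsel_mem a)
      have hk := key_ineq hlam0.le hlam1.le h₁ h₂
      rw [dist_eq_norm, dist_eq_norm]
      exact hk
    -- injectivity on A ∩ B
    have hinj : InjOn c (A ∩ B) := by
      intro p hp q' hq' h
      have h13 := hexp p q'
      rw [h, dist_self] at h13
      have h14 : dist p q' ≤ 0 := by nlinarith [dist_nonneg (x := p) (y := q')]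
      exact dist_le_zero.1 (le_antisymm h14 dist_nonneg).le
    -- the inverse map is Lipschitz with constant lam⁻¹
    set g := Function.invFunOn c (A ∩ B) with hg
    have hgmem : ∀ p ∈ S, g p ∈ A ∩ B := by
      rintro _ ⟨a, ha, rfl⟩
      exact Function.invFunOn_mem ⟨a, ha, rfl⟩
    have hgeq : ∀ p ∈ S, c (g p) = p := by
      rintro _ ⟨a, ha, rfl⟩
      exact Function.invFunOn_eq ⟨a, ha, rfl⟩
    have hgimg : g '' S = A ∩ B := by
      apply Subset.antisymm
      · rintro _ ⟨p, hp, rfl⟩; exact hgmem p hp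
      · intro a ha
        have h1 : c a ∈ S := mem_image_of_mem _ ha
        exact ⟨c a, h1, hinj (hgmem _ h1) ha (hgeq _ h1)⟩
    have hKlip : LipschitzOnWith (Real.toNNReal lam⁻¹) g S := by
      rw [lipschitzOnWith_iff_dist_le_mul]
      intro p hp p' hp'
      rw [Real.coe_toNNReal _ (by positivity)]
      have h3 := hexp (g p) (g p')
      rw [hgeq p hp, hgeq p' hp'] at h3
      rw [inv_mul_eq_div, le_div_iff₀ hlam0]
      linarith [h3]
    -- Hausdorff measure comparison
    have hH := hKlip.hausdorffMeasure_image_le (d := ((n + 1 : ℕ) : ℝ)) (by positivity)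
    rw [hgimg] at hH
    haveI hHaar : Measure.IsAddHaarMeasure
        (μH[((n + 1 : ℕ) : ℝ)] : Measure (EuclideanSpace ℝ (Fin (n + 1)))) := by
      have h := MeasureTheory.isAddHaarMeasure_hausdorffMeasure
        (E := EuclideanSpace ℝ (Fin (n + 1)))
      rwa [finrank_euclideanSpace_fin] at h
    have hvs : (volume : Measure (EuclideanSpace ℝ (Fin (n + 1))))
        = Measure.addHaarScalarFactor (volume : Measure (EuclideanSpace ℝ (Fin (n + 1))))
            (μH[((n + 1 : ℕ) : ℝ)]) • (μH[((n + 1 : ℕ) : ℝ)]) :=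
      Measure.isAddLeftInvariant_eq_smul _ _
    set c₀ := Measure.addHaarScalarFactor (volume : Measure (EuclideanSpace ℝ (Fin (n + 1))))
      (μH[((n + 1 : ℕ) : ℝ)]) with hc₀
    set L := ENNReal.ofReal lam with hL
    have hLK : ((Real.toNNReal lam⁻¹ : ℝ≥0) : ℝ≥0∞) = L⁻¹ := by
      rw [hL, ← ENNReal.ofReal_inv_of_pos hlam0]
      rfl
    have hvol_ineq : volume (A ∩ B) ≤ L⁻¹ ^ (n + 1) * volume S := by
      rw [hvs]
      simp only [Measure.smul_apply, smul_eq_mul]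
      calc (c₀ : ℝ≥0∞) * μH[((n + 1 : ℕ) : ℝ)] (A ∩ B)
          ≤ c₀ * (((Real.toNNReal lam⁻¹ : ℝ≥0) : ℝ≥0∞) ^ ((n + 1 : ℕ) : ℝ)
            * μH[((n + 1 : ℕ) : ℝ)] S) := mul_le_mul_right hH _
        _ = ((Real.toNNReal lam⁻¹ : ℝ≥0) : ℝ≥0∞) ^ ((n + 1 : ℕ) : ℝ)
            * (c₀ * μH[((n + 1 : ℕ) : ℝ)] S) := by ring
        _ = L⁻¹ ^ (n + 1) * (c₀ * μH[((n + 1 : ℕ) : ℝ)] S) := by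
            rw [ENNReal.rpow_natCast, hLK]
    have hL0 : L ≠ 0 := (ENNReal.ofReal_pos.2 hlam0).ne'
    have hLtop : L ≠ ⊤ := ENNReal.ofReal_ne_top
    have hvol_ineq2 : L ^ (n + 1) * volume (A ∩ B) ≤ volume S := by
      calc L ^ (n + 1) * volume (A ∩ B)
          ≤ L ^ (n + 1) * (L⁻¹ ^ (n + 1) * volume S) := mul_le_mul_right hvol_ineq _
        _ = (L * L⁻¹) ^ (n + 1) * volume S := by rw [mul_pow]; ring
        _ = volume S := by rw [ENNReal.mul_inv_cancel hL0 hLtop, one_pow, one_mul]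
    -- assembling
    have hdisjoint : Disjoint S (A ∩ B') := by
      rw [Set.disjoint_left]
      intro p hp hpA
      exact hSA p hp hpA.1
    have hsum_le : volume S + volume (A ∩ B') ≤ volume B' := by
      rw [← measure_union hdisjoint (hAmeas.inter measurableSet_closedBall)]
      apply measure_mono
      rintro p (hp | hp)
      · exact hSB' hp
      · exact hp.2
    have hBB' : volume (A ∩ B) ≤ volume (A ∩ B') := by
      apply measure_mono
      apply inter_subset_inter_right
      exact closedBall_subset_closedBall (by nlinarith)
    have hBall' : volume B' = ENNReal.ofReal ((1 + ε) ^ (n + 1)) * volume B := by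
      rw [hB', hB, Measure.addHaar_closedBall' volume y₀ (by positivity : (0:ℝ) ≤ (1 + ε) * ρ),
        Measure.addHaar_closedBall' volume y₀ hρ0.le, finrank_euclideanSpace_fin,
        mul_pow, ENNReal.ofReal_mul (by positivity), mul_assoc]
    have hmain : (1 + L ^ (n + 1)) * volume (A ∩ B)
        ≤ ENNReal.ofReal ((1 + ε) ^ (n + 1)) * volume B := by
      calc (1 + L ^ (n + 1)) * volume (A ∩ B)
          = volume (A ∩ B) + L ^ (n + 1) * volume (A ∩ B) := by ring
        _ ≤ volume (A ∩ B') + volume S := add_le_add hBB' hvol_ineq2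
        _ = volume S + volume (A ∩ B') := add_comm _ _
        _ ≤ volume B' := hsum_le
        _ = ENNReal.ofReal ((1 + ε) ^ (n + 1)) * volume B := hBall'
    have hB0 : volume B ≠ 0 := (measure_closedBall_pos volume y₀ hρ0).ne'
    have hBtop : volume B ≠ ⊤ := measure_closedBall_lt_top.ne
    have final : (1 + L ^ (n + 1)) * (volume (A ∩ B) / volume B)
        ≤ ENNReal.ofReal ((1 + ε) ^ (n + 1)) := by
      calc (1 + L ^ (n + 1)) * (volume (A ∩ B) / volume B)
          = ((1 + L ^ (n + 1)) * volume (A ∩ B)) / volume B := by rw [mul_div_assoc]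
        _ ≤ (ENNReal.ofReal ((1 + ε) ^ (n + 1)) * volume B) / volume B :=
            ENNReal.div_le_div_right hmain _
        _ = ENNReal.ofReal ((1 + ε) ^ (n + 1)) := by
            rw [mul_div_assoc, ENNReal.div_self hB0 hBtop, mul_one]
    rw [ENNReal.ofReal_pow hlam0.le]
    exact final
  -- taking the limit ρ → 0⁺
  have h1 : Tendsto (fun ρ : ℝ => (1 - ε * ρ / (s₀ + ρ)) ^ (n + 1)) (𝓝 0) (𝓝 1) := by
    have hc : Tendsto (fun ρ : ℝ => (1 - ε * ρ / (s₀ + ρ)) ^ (n + 1)) (𝓝 0)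
        (𝓝 ((1 - ε * 0 / (s₀ + 0)) ^ (n + 1))) := by
      apply Filter.Tendsto.pow
      apply Filter.Tendsto.sub tendsto_const_nhds
      apply Filter.Tendsto.div
      · exact tendsto_const_nhds.mul tendsto_id
      · exact tendsto_const_nhds.add tendsto_id
      · simpa using hs₀.ne'
    have hval : (1 - ε * 0 / (s₀ + 0)) ^ (n + 1) = 1 := by simp
    rwa [hval] at hc
  have h3 : Tendsto (fun ρ : ℝ => ENNReal.ofReal ((1 - ε * ρ / (s₀ + ρ)) ^ (n + 1)))
      (𝓝[>] 0) (𝓝 1) := by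
    have h := (ENNReal.continuous_ofReal.tendsto 1).comp
      (h1.mono_left (nhdsWithin_le_nhds (s := Ioi (0:ℝ))))
    simpa [Function.comp_def] using h
  have h2 : Tendsto (fun ρ : ℝ => 1 + ENNReal.ofReal ((1 - ε * ρ / (s₀ + ρ)) ^ (n + 1)))
      (𝓝[>] 0) (𝓝 2) := by
    have h4 := h3.const_add (1 : ℝ≥0∞)
    have : (1 : ℝ≥0∞) + 1 = 2 := one_add_one_eq_two
    rwa [this] at h4
  have hlim : Tendsto (fun ρ : ℝ => (1 + ENNReal.ofReal ((1 - ε * ρ / (s₀ + ρ)) ^ (n + 1))) *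
      (volume (A ∩ closedBall y₀ ρ) / volume (closedBall y₀ ρ))) (𝓝[>] (0:ℝ)) (𝓝 2) := by
    have hm := ENNReal.Tendsto.mul h2 (Or.inl two_ne_zero) hy₀T (Or.inl one_ne_zero)
    rwa [mul_one] at hm
  have hev : ∀ᶠ ρ in 𝓝[>] (0:ℝ),
      (1 + ENNReal.ofReal ((1 - ε * ρ / (s₀ + ρ)) ^ (n + 1))) *
        (volume (A ∩ closedBall y₀ ρ) / volume (closedBall y₀ ρ))
        ≤ ENNReal.ofReal ((1 + ε) ^ (n + 1)) := by
    filter_upwards [Ioo_mem_nhdsGT_of_mem ⟨le_refl (0:ℝ), hs₀⟩] with ρ hρ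
    exact key ρ hρ.1 hρ.2
  have h2le : (2 : ℝ≥0∞) ≤ ENNReal.ofReal ((1 + ε) ^ (n + 1)) := le_of_tendsto hlim hev
  have hlt : ENNReal.ofReal ((1 + ε) ^ (n + 1)) < 2 := by
    rw [← ENNReal.ofReal_ofNat 2]
    exact (ENNReal.ofReal_lt_ofReal_iff (by norm_num)).2 hεlt
  exact absurd (h2le.trans_lt hlt) (lt_irrefl _)
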